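/- arXiv:2407.07253 — 3 statements merged into one kernel-verified Lean document; each statement's English description precedes it below -/
import Mathlib

section
/- If K is symmetric positive definite and each I⁽ⁱ⁾ is a (nonzero) restriction matrix whose rows jointly span ℝⁿ (i.e., the concatenation of the I⁽ⁱ⁾ has rank n), then the additive Schwarz operator M⁻¹ = Σᵢ (I⁽ⁱ⁾)ᵀ (I⁽ⁱ⁾ K (I⁽ⁱ⁾)ᵀ)⁻¹ I⁽ⁱ⁾ is symmetric positive definite. -/
open Matrix

lemma transpose_mulVec_inj {m n : ℕ} (A : Matrix (Fin m) (Fin n) ℝ)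
    (h : A.rank = m) {y : Fin m → ℝ} (hy : Aᵀ *ᵥ y = 0) : y = 0 := by
  have hrt : Aᵀ.rank = m := by rw [Matrix.rank_transpose]; exact h
  have h1 := LinearMap.finrank_range_add_finrank_ker (Aᵀ).mulVecLin
  rw [show Module.finrank ℝ (LinearMap.range (Aᵀ).mulVecLin) = Aᵀ.rank from rfl, hrt] at h1
  simp only [Module.finrank_fintype_fun_eq_card, Fintype.card_fin] at h1
  have hker : Module.finrank ℝ (LinearMap.ker (Aᵀ).mulVecLin) = 0 := by omega
  have hbot : LinearMap.ker (Aᵀ).mulVecLin = ⊥ := Submodule.finrank_eq_zero.mp hker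
  have hmem : y ∈ LinearMap.ker (Aᵀ).mulVecLin := LinearMap.mem_ker.mpr (by
    rw [Matrix.mulVecLin_apply]; exact hy)
  rw [hbot] at hmem
  simpa using hmem

lemma dot_conj_eq {m n : ℕ} (A : Matrix (Fin m) (Fin n) ℝ) (B : Matrix (Fin m) (Fin m) ℝ)
    (x : Fin n → ℝ) :
    x ⬝ᵥ (Aᵀ * B * A) *ᵥ x = (A *ᵥ x) ⬝ᵥ B *ᵥ (A *ᵥ x) := by
  rw [← Matrix.mulVec_mulVec, ← Matrix.mulVec_mulVec, Matrix.dotProduct_mulVec x,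
    Matrix.vecMul_transpose, Matrix.dotProduct_mulVec (A *ᵥ x)]

lemma sum_mulVec' {n : ℕ} {ι : Type} [Fintype ι] (M : ι → Matrix (Fin n) (Fin n) ℝ)
    (x : Fin n → ℝ) : (∑ i, M i) *ᵥ x = ∑ i, M i *ᵥ x := by
  ext j
  rw [Finset.sum_apply]
  simp only [Matrix.mulVec, dotProduct, Matrix.sum_apply, Finset.sum_mul]
  rw [Finset.sum_comm]

lemma dot_sum' {n : ℕ} {ι : Type} [Fintype ι] (x : Fin n → ℝ) (v : ι → Fin n → ℝ) :
    x ⬝ᵥ (∑ i, v i) = ∑ i, x ⬝ᵥ v i := by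
  simp only [dotProduct, Finset.sum_apply, Finset.mul_sum]
  rw [Finset.sum_comm]

theorem additive_schwarz_posdef (N : ℕ) (ι : Type) [Fintype ι] (np : ι → ℕ)
    (K : Matrix (Fin N) (Fin N) ℝ) (hK : K.PosDef)
    (Iop : ∀ i : ι, Matrix (Fin (np i)) (Fin N) ℝ)
    (hrow : ∀ i : ι, (Iop i).rank = np i)
    (hspan : ∀ x : Fin N → ℝ, (∀ i : ι, (Iop i).mulVec x = 0) → x = 0) :
    (∑ i : ι, (Iop i)ᵀ * (Iop i * K * (Iop i)ᵀ)⁻¹ * Iop i).PosDef := by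
  have hctI : ∀ i : ι, (Iop i)ᴴ = (Iop i)ᵀ := fun i =>
    Matrix.conjTranspose_eq_transpose_of_trivial _
  -- each patch matrix is PosDef
  have hA : ∀ i : ι, (Iop i * K * (Iop i)ᵀ).PosDef := by
    intro i
    rw [Matrix.posDef_iff_dotProduct_mulVec]
    constructor
    · show _ᴴ = _
      rw [Matrix.conjTranspose_mul, Matrix.conjTranspose_mul,
        Matrix.conjTranspose_eq_transpose_of_trivial, Matrix.transpose_transpose,
        hctI, hK.isHermitian.eq, Matrix.mul_assoc]
    · intro y hy
      have hz : (Iop i)ᵀ *ᵥ y ≠ 0 := fun hc => hy (transpose_mulVec_inj (Iop i) (hrow i) hc)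
      have hp := hK.dotProduct_mulVec_pos hz
      rw [star_trivial] at hp
      rw [star_trivial]
      have : y ⬝ᵥ (Iop i * K * (Iop i)ᵀ) *ᵥ y
          = ((Iop i)ᵀ *ᵥ y) ⬝ᵥ K *ᵥ ((Iop i)ᵀ *ᵥ y) := by
        have := dot_conj_eq ((Iop i)ᵀ) K y
        rwa [Matrix.transpose_transpose] at this
      rw [this]; exact hp
  have hAinv : ∀ i : ι, (Iop i * K * (Iop i)ᵀ)⁻¹.PosDef := fun i => (hA i).inv
  -- each summand is PosSemidef
  have hterm : ∀ i : ι, ((Iop i)ᵀ * (Iop i * K * (Iop i)ᵀ)⁻¹ * Iop i).PosSemidef := by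
    intro i
    have := (hAinv i).posSemidef.conjTranspose_mul_mul_same (Iop i)
    rwa [hctI] at this
  rw [Matrix.posDef_iff_dotProduct_mulVec]
  constructor
  · show _ᴴ = _
    rw [Matrix.conjTranspose_sum]
    exact Finset.sum_congr rfl fun i _ => (hterm i).isHermitian
  · intro x hx
    rw [star_trivial, sum_mulVec', dot_sum']
    obtain ⟨i0, hi0⟩ : ∃ i, Iop i *ᵥ x ≠ 0 := by
      by_contra hc
      push_neg at hc
      exact hx (hspan x hc)
    refine Finset.sum_pos' (fun i _ => ?_) ⟨i0, Finset.mem_univ _, ?_⟩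
    · have := (hterm i).dotProduct_mulVec_nonneg x
      rwa [star_trivial] at this
    · have hpos := (hAinv i0).dotProduct_mulVec_pos hi0
      rw [star_trivial] at hpos
      rw [dot_conj_eq]
      exact hpos
end

section
/- A stationary iteration with error propagation matrix G = I - ω M⁻¹ K converges to the solution of K x = b for every initial guess if and only if the spectral radius of G is less than 1 (over ℂ, with K invertible). -/
open Filter Topology
open scoped NNReal ENNReal

attribute [local instance] Matrix.linftyOpNormedRing Matrix.linftyOpNormedAlgebra

lemma aux_exists_pow_norm_le {N : Type*} [Fintype N] [DecidableEq N]
    {a : Matrix N N ℂ} (h : spectralRadius ℂ a < 1) :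
    ∃ r : ℝ, 0 ≤ r ∧ r < 1 ∧ ∀ᶠ k : ℕ in atTop, ‖a ^ k‖ ≤ r ^ k := by
  haveI : CompleteSpace (Matrix N N ℂ) := FiniteDimensional.complete ℂ _
  obtain ⟨r, hr1, hr2⟩ := ENNReal.lt_iff_exists_nnreal_btwn.mp h
  have hr2' : (r : ℝ) < 1 := by exact_mod_cast ENNReal.coe_lt_one_iff.mp hr2
  refine ⟨r, r.coe_nonneg, hr2', ?_⟩
  have h2 := spectrum.pow_nnnorm_pow_one_div_tendsto_nhds_spectralRadius a
  have h3 : ∀ᶠ k : ℕ in atTop, (‖a ^ k‖₊ : ℝ≥0∞) ^ (1/(k:ℝ)) < r := h2.eventually_lt_const hr1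
  filter_upwards [h3, Filter.eventually_ge_atTop 1] with k hk hk1
  have hk0 : (k : ℝ) ≠ 0 := by positivity
  have h4 : ((‖a ^ k‖₊ : ℝ≥0∞) ^ (1/(k:ℝ))) ^ (k : ℝ) ≤ (r : ℝ≥0∞) ^ (k : ℝ) :=
    ENNReal.rpow_le_rpow hk.le (by positivity)
  rw [← ENNReal.rpow_mul, one_div, inv_mul_cancel₀ hk0, ENNReal.rpow_one,
    ENNReal.rpow_natCast, ← ENNReal.coe_pow, ENNReal.coe_le_coe] at h4
  calc ‖a ^ k‖ = ((‖a ^ k‖₊ : ℝ≥0) : ℝ) := rfl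
    _ ≤ ((r ^ k : ℝ≥0) : ℝ) := by exact_mod_cast h4
    _ = (r : ℝ) ^ k := by push_cast; ring

theorem stationary_iteration_convergence_iff_spectral_radius (n : ℕ)
    (K M : Matrix (Fin n) (Fin n) ℂ) (hM : IsUnit M.det) (hK : IsUnit K.det)
    (ω : ℂ) (b : Fin n → ℂ) :
    (∀ x : ℕ → Fin n → ℂ,
        (∀ k, x (k + 1) = x k + ω • M⁻¹.mulVec (b - K.mulVec (x k))) →
        Filter.Tendsto x Filter.atTop (nhds (K⁻¹.mulVec b))) ↔
      (∀ μ ∈ spectrum ℂ (1 - ω • (M⁻¹ * K)), ‖μ‖ < 1) := by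
  set G : Matrix (Fin n) (Fin n) ℂ := 1 - ω • (M⁻¹ * K) with hG
  set xs : Fin n → ℂ := K⁻¹.mulVec b with hxs
  have hKxs : K.mulVec xs = b := by
    rw [hxs, Matrix.mulVec_mulVec, Matrix.mul_nonsing_inv K hK, Matrix.one_mulVec]
  -- one step of the iteration in terms of the error
  have hstep : ∀ y : Fin n → ℂ,
      y + ω • M⁻¹.mulVec (b - K.mulVec y) = xs + G.mulVec (y - xs) := by
    intro y
    have h1 : b - K.mulVec y = K.mulVec (xs - y) := by
      rw [Matrix.mulVec_sub, hKxs]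
    rw [h1, hG, Matrix.sub_mulVec, Matrix.one_mulVec, Matrix.smul_mulVec,
      Matrix.mulVec_mulVec, Matrix.mulVec_sub, Matrix.mulVec_sub]
    module
  constructor
  · -- convergence → spectral radius < 1
    intro hconv μ hμ
    rw [spectrum.mem_iff] at hμ
    rw [Matrix.isUnit_iff_isUnit_det, isUnit_iff_ne_zero, not_not] at hμ
    obtain ⟨v, hv0, hv⟩ := Matrix.exists_mulVec_eq_zero_iff.mpr hμ
    have hGv : G.mulVec v = μ • v := by
      have h' := hv
      rw [Matrix.sub_mulVec, sub_eq_zero] at h'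
      rw [← h', Algebra.algebraMap_eq_smul_one, Matrix.smul_mulVec, Matrix.one_mulVec]
    have hrec : ∀ k : ℕ, G.mulVec (μ ^ k • v) = μ ^ (k+1) • v := by
      intro k
      rw [Matrix.mulVec_smul, hGv, smul_smul, ← pow_succ]
    set x : ℕ → Fin n → ℂ := fun k => xs + μ ^ k • v with hx
    have hxrec : ∀ k, x (k + 1) = x k + ω • M⁻¹.mulVec (b - K.mulVec (x k)) := by
      intro k
      rw [hstep (x k)]
      simp only [hx, add_sub_cancel_left, hrec k]
    have h1 := hconv x hxrec
    have h2 : Tendsto (fun k : ℕ => μ ^ k • v) atTop (𝓝 0) := by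
      have := h1.sub (tendsto_const_nhds (x := xs))
      simpa [hx] using this
    obtain ⟨i, hi⟩ := Function.ne_iff.mp hv0
    have h3 : Tendsto (fun k : ℕ => μ ^ k * v i) atTop (𝓝 0) := by
      have := (continuous_apply i).continuousAt.tendsto.comp h2
      simpa [Function.comp_def] using this
    have h4 : Tendsto (fun k : ℕ => μ ^ k) atTop (𝓝 0) := by
      have := h3.mul_const (v i)⁻¹
      simpa [mul_assoc, mul_inv_cancel₀ hi] using this
    by_contra hle
    push_neg at hle
    have h5 : ∀ k : ℕ, (1:ℝ) ≤ ‖μ ^ k‖ := by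
      intro k
      rw [norm_pow]
      exact one_le_pow₀ hle
    have h6 := h4.norm
    rw [norm_zero] at h6
    have := (h6.eventually_lt_const (by norm_num : (0:ℝ) < 1)).exists
    obtain ⟨k, hk⟩ := this
    exact absurd (h5 k) (not_le.mpr hk)
  · -- spectral radius < 1 → convergence
    intro hspec x hxrec
    rcases Nat.eq_zero_or_pos n with hn | hn
    · subst hn
      have : x = fun _ => xs := by
        funext k i; exact absurd i.2 (by omega)
      rw [this]
      exact tendsto_const_nhds
    haveI : Nonempty (Fin n) := ⟨⟨0, hn⟩⟩
    haveI : CompleteSpace (Matrix (Fin n) (Fin n) ℂ) := FiniteDimensional.complete ℂ _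
    have hρ : spectralRadius ℂ G < 1 := by
      have := spectrum.spectralRadius_lt_of_forall_lt (a := G) (r := 1)
        (fun z hz => by simpa [← NNReal.coe_lt_coe] using hspec z hz)
      simpa using this
    obtain ⟨r, hr0, hr1, hev⟩ := aux_exists_pow_norm_le hρ
    -- error form
    have herr : ∀ k : ℕ, x k = xs + (G ^ k).mulVec (x 0 - xs) := by
      intro k
      induction k with
      | zero => simp [Matrix.one_mulVec]
      | succ k ih =>
        rw [hxrec k, hstep (x k), ih]
        congr 1
        rw [add_sub_cancel_left, Matrix.mulVec_mulVec, ← pow_succ']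
    have h0 : Tendsto (fun k : ℕ => (G ^ k).mulVec (x 0 - xs)) atTop (𝓝 0) := by
      apply squeeze_zero_norm' (a := fun k => r ^ k * ‖x 0 - xs‖)
      · filter_upwards [hev] with k hk
        calc ‖(G ^ k).mulVec (x 0 - xs)‖ ≤ ‖G ^ k‖ * ‖x 0 - xs‖ :=
              Matrix.linfty_opNorm_mulVec _ _
          _ ≤ r ^ k * ‖x 0 - xs‖ := by
              exact mul_le_mul_of_nonneg_right hk (norm_nonneg _)
      · simpa using (tendsto_pow_atTop_nhds_zero_of_lt_one hr0 hr1).mul_const ‖x 0 - xs‖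
    have : Tendsto (fun k => xs + (G ^ k).mulVec (x 0 - xs)) atTop (𝓝 (xs + 0)) :=
      tendsto_const_nhds.add h0
    rw [add_zero] at this
    exact this.congr (fun k => (herr k).symm)
end

section
/- For the saddle-point matrix K = [[A, Bᵀ],[B, 0]] with A symmetric positive definite and B of full row rank, the block-diagonal preconditioned matrix diag(A, S)⁻¹ K, where S = B A⁻¹ Bᵀ, has minimal polynomial dividing (x-1)(x² - x - 1), so a Krylov method converges in at most 3 iterations. -/
open Matrix

theorem block_diag_preconditioned_minimal_polynomial (n m : ℕ)
    (A : Matrix (Fin n) (Fin n) ℝ) (B : Matrix (Fin m) (Fin n) ℝ)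
    (hA : A.PosDef) (hB : B.rank = m) :
    let S := B * A⁻¹ * Bᵀ
    let K := Matrix.fromBlocks A Bᵀ B (0 : Matrix (Fin m) (Fin m) ℝ)
    let T := (Matrix.fromBlocks A 0 0 S)⁻¹ * K
    T * (T - 1) * (T * T - T - 1) = 0 := by
  intro S K T
  -- Bᵀ has trivial kernel
  have hBt : Function.Injective (Bᵀ.mulVecLin) := by
    rw [← LinearMap.ker_eq_bot]
    have hrank : Bᵀ.rank = m := by rw [Matrix.rank_transpose]; exact hB
    have := LinearMap.finrank_range_add_finrank_ker (Bᵀ.mulVecLin)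
    rw [show Module.finrank ℝ (LinearMap.range Bᵀ.mulVecLin) = m from hrank] at this
    simp only [Module.finrank_pi, Fintype.card_fin] at this
    have hker : Module.finrank ℝ (LinearMap.ker Bᵀ.mulVecLin) = 0 := by omega
    exact Submodule.finrank_eq_zero.mp hker
  have hS : S.PosDef := by
    refine Matrix.PosDef.of_dotProduct_mulVec_pos ?_ ?_
    · have := Matrix.isHermitian_mul_mul_conjTranspose B hA.inv.isHermitian
      simpa only [Matrix.conjTranspose_eq_transpose_of_trivial] using this
    · intro x hx
      have hBx : x ᵥ* B ≠ 0 := by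
        intro h
        apply hx
        refine hBt (a₁ := x) (a₂ := 0) ?_
        show Bᵀ *ᵥ x = Bᵀ *ᵥ 0
        rw [Matrix.mulVec_transpose, h, Matrix.mulVec_zero]
      have hpos := hA.inv.dotProduct_mulVec_pos hBx
      calc (0:ℝ) < star (x ᵥ* B) ⬝ᵥ A⁻¹ *ᵥ (x ᵥ* B) := hpos
        _ = star x ⬝ᵥ (S *ᵥ x) := by
          simp only [S, star_trivial]
          rw [← Matrix.mulVec_mulVec, ← Matrix.mulVec_mulVec,
            Matrix.dotProduct_mulVec x, Matrix.mulVec_transpose]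
  have hAu : IsUnit A := hA.isUnit
  have hSu : IsUnit S := hS.isUnit
  have hdiag : (Matrix.fromBlocks A 0 0 S)⁻¹ = Matrix.fromBlocks A⁻¹ 0 0 S⁻¹ := by
    rw [Matrix.inv_fromBlocks_zero₂₁_of_isUnit_iff A 0 S (iff_of_true hAu hSu)]
    simp
  have hAinv : A⁻¹ * A = 1 := Matrix.nonsing_inv_mul A ((Matrix.isUnit_iff_isUnit_det A).mp hAu)
  have hSinv : S⁻¹ * S = 1 := Matrix.nonsing_inv_mul S ((Matrix.isUnit_iff_isUnit_det S).mp hSu)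
  have hT : T = Matrix.fromBlocks 1 (A⁻¹ * Bᵀ) (S⁻¹ * B) 0 := by
    show (Matrix.fromBlocks A 0 0 S)⁻¹ * K = _
    rw [hdiag]
    simp [K, Matrix.fromBlocks_multiply, hAinv]
  set X := A⁻¹ * Bᵀ with hX
  set Y := S⁻¹ * B with hY
  have hYX : Y * X = 1 := by
    rw [hY, hX, Matrix.mul_assoc, ← Matrix.mul_assoc B]
    exact hSinv
  rw [hT]
  have h1 : (1 : Matrix (Fin n ⊕ Fin m) (Fin n ⊕ Fin m) ℝ) = Matrix.fromBlocks 1 0 0 1 :=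
    (Matrix.fromBlocks_one).symm
  rw [h1]
  rw [← Matrix.fromBlocks_zero]
  simp only [sub_eq_add_neg, Matrix.fromBlocks_neg, Matrix.fromBlocks_add,
    Matrix.fromBlocks_multiply]
  have hYXY : Y * (X * Y) = Y := by rw [← Matrix.mul_assoc, hYX, Matrix.one_mul]
  refine Matrix.fromBlocks_inj.mpr ⟨?_, ?_, ?_, ?_⟩ <;>
    simp [← hX, ← hY, Matrix.mul_assoc, Matrix.mul_add, Matrix.add_mul, Matrix.mul_neg, Matrix.neg_mul, hYX, hYXY]
end
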